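/- Let G=(V,E) be a finite simple graph with a graph tensor network in Vidal form satisfying the local orthogonality condition at every directed edge. Define vertex tensors T_a[i,(j_{ba})_{b∈∂a}] = Γ_a[i,(j_{ba})_{b∈∂a}]·Π_{b∈∂a} λ_ba[j_ba]^{1/2}, and for each directed edge a→b define the diagonal message m_{a→b}[j,j'] = δ_{j,j'}·λ_ab[j]. Then these messages are an exact fixed point of the belief-propagation update: for every directed edge a→b and all j,j'∈{0,…,d_ab−1}, Σ T_a[i_a,(j_{ca})_{c∈∂a}]·T_a*[i_a,(j'_{ca})_{c∈∂a}]·Π_{c∈∂a\{b}} m_{c→a}[j_{ca}, j'_{ca}] = m_{a→b}[j,j'], where the sum runs over i_a∈{0,1} and over all unprimed and primed bond-index values on the edges {c,a} with c∈∂a\{b}, and where the bond index of edge {a,b} is fixed to j (unprimed) and j' (primed). Consequently, the unit-trace normalized messages m_{a→b}[j,j'] = δ_{j,j'}·λ_ab[j]/Σ_k λ_ab[k] satisfy the belief-propagation update equation up to a positive constant factor. -/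

import Mathlib

open scoped BigOperators
set_option maxHeartbeats 1000000

variable {V : Type*} [Fintype V] [DecidableEq V]

/-- A graph tensor network in Vidal form on a finite simple graph `G`: a bond dimension
`d e ≥ 1` and a nonnegative vector `lam e` (the entries `lam e k` for `k < d e` being the
relevant ones) for each edge `e`, and for each vertex `a` a tensor `Γ a` taking a physical
index in `Fin 2` and a bond index for each edge incident to `a`. -/
structure VidalNet (G : SimpleGraph V) [DecidableRel G.Adj] where
  d : G.edgeSet → ℕ
  d_pos : ∀ e, 0 < d e
  lam : G.edgeSet → ℕ → ℝ
  lam_nonneg : ∀ e k, 0 ≤ lam e k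
  Γ : ∀ a : V, Fin 2 → ({e : G.edgeSet // a ∈ (e : Sym2 V)} → ℕ) → ℂ

/-- `branchV G a b` is the vertex set `V_{b→a}` of the connected component of `b` in the
graph `G` with the edge `{a,b}` removed. -/
def branchV (G : SimpleGraph V) (a b : V) : Set V :=
  {c | (G.deleteEdges {s(a, b)}).Reachable b c}

/-- `branchE G a b` is the edge set `E_{b→a}` of the connected component of `b` in the
graph `G` with the edge `{a,b}` removed. -/
def branchE (G : SimpleGraph V) [DecidableRel G.Adj] (a b : V) : Set G.edgeSet :=
  {e | (e : Sym2 V) ≠ s(a, b) ∧ ∀ x ∈ (e : Sym2 V), x ∈ branchV G a b}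

namespace VidalNet

variable {G : SimpleGraph V} [DecidableRel G.Adj]

/-- The state represented by a graph tensor network in Vidal form:
`Ψ[(i_a)] = Σ_j (Π_{a∈V} Γ_a[i_a,(j_{ab})_{b∈∂a}])·(Π_{e∈E} λ_e[j_e])`. -/
noncomputable def psi (net : VidalNet G) (i : V → Fin 2) : ℂ :=
  ∑ j ∈ Fintype.piFinset (fun e : G.edgeSet => Finset.range (net.d e)),
    (∏ a : V, net.Γ a (i a) (fun e => j e.1)) * ∏ e : G.edgeSet, (net.lam e (j e) : ℂ)

open scoped Classical in
/-- The Schmidt vector `u_{a→b}(j)` of the subtree `V_{a→b}` of `a` (the connected component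
of `a` in the graph with the edge `{a,b}` removed). -/
noncomputable def schmidt (net : VidalNet G) (a b : V) (j : ℕ) :
    ({c : V // c ∈ branchV G b a} → Fin 2) → ℂ := fun i =>
  ∑ k ∈ Fintype.piFinset (fun e : {e : G.edgeSet // e ∈ branchE G b a} =>
      Finset.range (net.d e.1)),
    (∏ c : {c : V // c ∈ branchV G b a},
        net.Γ c.1 (i c)
          (fun e => if (e.1 : Sym2 V) = s(a, b) then j
            else if h : e.1 ∈ branchE G b a then k ⟨e.1, h⟩ else 0)) *
      ∏ e : {e : G.edgeSet // e ∈ branchE G b a}, (net.lam e.1 (k e) : ℂ)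

open scoped Classical in
/-- The Gram matrix `G_{a→b}[j,j'] = ⟨u_{a→b}(j'), u_{a→b}(j)⟩` of the Schmidt vectors,
conjugate-linear in the first argument. -/
noncomputable def gram (net : VidalNet G) (a b : V) (j j' : ℕ) : ℂ :=
  ∑ i : ({c : V // c ∈ branchV G b a} → Fin 2),
    (starRingEnd ℂ) (net.schmidt a b j' i) * net.schmidt a b j i

/-- The local orthogonality condition at the directed edge `a → b`. -/
def LocalOrtho (net : VidalNet G) {a b : V} (hab : G.Adj a b) : Prop :=
  ∀ j j' : ℕ, j < net.d ⟨s(a, b), (SimpleGraph.mem_edgeSet G).mpr hab⟩ →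
    j' < net.d ⟨s(a, b), (SimpleGraph.mem_edgeSet G).mpr hab⟩ →
    (if j = j' then (1 : ℂ) else 0) =
      ∑ ia : Fin 2,
        ∑ g ∈ Fintype.piFinset
            (fun e : {e : {e : G.edgeSet // a ∈ (e : Sym2 V)} // (e.1 : Sym2 V) ≠ s(a, b)} =>
              Finset.range (net.d e.1.1)),
          net.Γ a ia (fun e => if h : (e.1 : Sym2 V) = s(a, b) then j else g ⟨e, h⟩) *
            (starRingEnd ℂ)
              (net.Γ a ia (fun e => if h : (e.1 : Sym2 V) = s(a, b) then j' else g ⟨e, h⟩)) *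
            ∏ e : {e : {e : G.edgeSet // a ∈ (e : Sym2 V)} // (e.1 : Sym2 V) ≠ s(a, b)},
              ((net.lam e.1.1 (g e) : ℂ)) ^ 2

end VidalNet

section BPFixedPoint

variable {V : Type*} [Fintype V] [DecidableEq V] {G : SimpleGraph V} [DecidableRel G.Adj]

/-- The edges incident to the vertex `a` other than the (unordered) pair `p`. -/
abbrev SideEdges (G : SimpleGraph V) [DecidableRel G.Adj] (a : V) (p : Sym2 V) :=
  {e : {e : G.edgeSet // a ∈ (e : Sym2 V)} // (e.1 : Sym2 V) ≠ p}

/-- The vertex tensors `T_a[i,(j_ba)] = Γ_a[i,(j_ba)]·Π_{b∈∂a} λ_ba[j_ba]^{1/2}` obtained by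
splitting the Schmidt coefficients symmetrically among the neighboring tensors. -/
noncomputable def VidalNet.symTensor (net : VidalNet G) (a : V) :
    Fin 2 → ({e : G.edgeSet // a ∈ (e : Sym2 V)} → ℕ) → ℂ := fun ia J =>
  net.Γ a ia J *
    ∏ e : {e : G.edgeSet // a ∈ (e : Sym2 V)}, (Real.sqrt (net.lam e.1 (J e)) : ℂ)

private lemma prod_split_subtype {I : Type*} [Fintype I] [DecidableEq I] (e₀ : I)
    (P : I → Prop) [DecidablePred P] (hP : ∀ e, P e ↔ e ≠ e₀) (f : I → ℂ) :
    ∏ e, f e = f e₀ * ∏ e : {e // P e}, f e.1 := by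
  rw [← Finset.mul_prod_erase Finset.univ f (Finset.mem_univ e₀)]
  congr 1
  exact Finset.prod_subtype _ (fun x => by simp [hP]) f

private lemma bp_exact {G : SimpleGraph V} [DecidableRel G.Adj]
    (net : VidalNet G) (hortho : ∀ a b : V, ∀ hab : G.Adj a b, net.LocalOrtho hab)
    (a b : V) (hab : G.Adj a b) (j j' : ℕ)
    (hj : j < net.d ⟨s(a, b), (SimpleGraph.mem_edgeSet G).mpr hab⟩)
    (hj' : j' < net.d ⟨s(a, b), (SimpleGraph.mem_edgeSet G).mpr hab⟩) :
    ∑ ia : Fin 2,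
        ∑ g ∈ Fintype.piFinset
            (fun e : SideEdges G a s(a, b) => Finset.range (net.d e.1.1)),
          ∑ g' ∈ Fintype.piFinset
              (fun e : SideEdges G a s(a, b) => Finset.range (net.d e.1.1)),
            net.symTensor a ia
                (fun e => if h : (e.1 : Sym2 V) = s(a, b) then j else g ⟨e, h⟩) *
              (starRingEnd ℂ)
                (net.symTensor a ia
                  (fun e => if h : (e.1 : Sym2 V) = s(a, b) then j' else g' ⟨e, h⟩)) *
              ∏ e : SideEdges G a s(a, b),
                (if g e = g' e then (net.lam e.1.1 (g e) : ℂ) else 0)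
        = if j = j' then (net.lam ⟨s(a, b), (SimpleGraph.mem_edgeSet G).mpr hab⟩ j : ℂ)
          else 0 := by
  classical
  set eab : G.edgeSet := ⟨s(a, b), (SimpleGraph.mem_edgeSet G).mpr hab⟩ with heab
  set e₀ : {e : G.edgeSet // a ∈ (e : Sym2 V)} := ⟨eab, Sym2.mem_mk_left a b⟩ with he₀
  have hP : ∀ e : {e : G.edgeSet // a ∈ (e : Sym2 V)},
      ((e.1 : Sym2 V) ≠ s(a, b)) ↔ e ≠ e₀ := by
    intro e
    constructor
    · intro h he; exact h (by rw [he])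
    · intro h hc; exact h (Subtype.ext (Subtype.ext hc))
  -- collapse the g' sum to g' = g
  have step1 : ∀ ia : Fin 2, ∀ g ∈ Fintype.piFinset
      (fun e : SideEdges G a s(a, b) => Finset.range (net.d e.1.1)),
      ∑ g' ∈ Fintype.piFinset
          (fun e : SideEdges G a s(a, b) => Finset.range (net.d e.1.1)),
        net.symTensor a ia
            (fun e => if h : (e.1 : Sym2 V) = s(a, b) then j else g ⟨e, h⟩) *
          (starRingEnd ℂ)
            (net.symTensor a ia
              (fun e => if h : (e.1 : Sym2 V) = s(a, b) then j' else g' ⟨e, h⟩)) *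
          ∏ e : SideEdges G a s(a, b),
            (if g e = g' e then (net.lam e.1.1 (g e) : ℂ) else 0)
      = net.symTensor a ia
            (fun e => if h : (e.1 : Sym2 V) = s(a, b) then j else g ⟨e, h⟩) *
          (starRingEnd ℂ)
            (net.symTensor a ia
              (fun e => if h : (e.1 : Sym2 V) = s(a, b) then j' else g ⟨e, h⟩)) *
          ∏ e : SideEdges G a s(a, b), (net.lam e.1.1 (g e) : ℂ) := by
    intro ia g hg
    rw [Finset.sum_eq_single_of_mem g hg]
    · simp
    · intro g' _ hne
      have : ∃ e : SideEdges G a s(a, b), g e ≠ g' e := by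
        by_contra hc
        push_neg at hc
        exact hne (funext fun e => (hc e).symm)
      obtain ⟨e, he⟩ := this
      rw [Finset.prod_eq_zero (Finset.mem_univ e) (by simp [he]), mul_zero]
  rw [Finset.sum_congr rfl fun ia _ => Finset.sum_congr rfl (step1 ia)]
  clear step1
  -- rewrite each term
  have step2 : ∀ ia : Fin 2, ∀ g ∈ Fintype.piFinset
      (fun e : SideEdges G a s(a, b) => Finset.range (net.d e.1.1)),
      net.symTensor a ia
            (fun e => if h : (e.1 : Sym2 V) = s(a, b) then j else g ⟨e, h⟩) *
          (starRingEnd ℂ)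
            (net.symTensor a ia
              (fun e => if h : (e.1 : Sym2 V) = s(a, b) then j' else g ⟨e, h⟩)) *
          ∏ e : SideEdges G a s(a, b), (net.lam e.1.1 (g e) : ℂ)
      = ((Real.sqrt (net.lam eab j) : ℂ) * (Real.sqrt (net.lam eab j') : ℂ)) *
          (net.Γ a ia (fun e => if h : (e.1 : Sym2 V) = s(a, b) then j else g ⟨e, h⟩) *
            (starRingEnd ℂ)
              (net.Γ a ia (fun e => if h : (e.1 : Sym2 V) = s(a, b) then j' else g ⟨e, h⟩)) *
            ∏ e : SideEdges G a s(a, b), ((net.lam e.1.1 (g e) : ℂ)) ^ 2) := by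
    intro ia g hg
    unfold VidalNet.symTensor
    rw [prod_split_subtype e₀ _ hP, prod_split_subtype e₀ _ hP]
    have hj0 : (if h : ((e₀.1 : Sym2 V)) = s(a, b) then j else g ⟨e₀, h⟩) = j := dif_pos rfl
    have hj0' : (if h : ((e₀.1 : Sym2 V)) = s(a, b) then j' else g ⟨e₀, h⟩) = j' := dif_pos rfl
    have hside : ∀ (k : ℕ) (e : SideEdges G a s(a, b)),
        (if h : ((e.1.1 : Sym2 V)) = s(a, b) then k else g ⟨e.1, h⟩) = g e := by
      intro k e; rw [dif_neg e.2]
    have he : (e₀.1 : G.edgeSet) = eab := rfl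
    simp only [hj0, hj0']
    simp only [hj0, hj0', hside, he, map_mul, map_prod, Complex.conj_ofReal, dite_true]
    have key : (∏ e : SideEdges G a s(a, b), ((Real.sqrt (net.lam e.1.1 (g e)) : ℝ) : ℂ)) *
        (∏ e : SideEdges G a s(a, b), ((Real.sqrt (net.lam e.1.1 (g e)) : ℝ) : ℂ)) *
        (∏ e : SideEdges G a s(a, b), ((net.lam e.1.1 (g e) : ℝ) : ℂ))
        = ∏ e : SideEdges G a s(a, b), ((net.lam e.1.1 (g e) : ℝ) : ℂ) ^ 2 := by
      rw [← Finset.prod_mul_distrib, ← Finset.prod_mul_distrib]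
      refine Finset.prod_congr rfl fun e _ => ?_
      have hx := net.lam_nonneg e.1.1 (g e)
      norm_cast
      rw [Real.mul_self_sqrt hx, sq]
    rw [← key]
    ring
  rw [Finset.sum_congr rfl fun ia _ => Finset.sum_congr rfl (step2 ia)]
  simp only [← Finset.mul_sum]
  rw [← hortho a b hab j j' hj hj']
  by_cases hjj : j = j'
  · subst hjj
    rw [← Complex.ofReal_mul, Real.mul_self_sqrt (net.lam_nonneg eab j)]
    simp
  · simp [hjj]

/-- For a graph tensor network in Vidal form satisfying the local
orthogonality condition at every directed edge, the diagonal messages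
`m_{a→b}[j,j'] = δ_{j,j'}·λ_ab[j]` are an exact fixed point of the belief-propagation update
for the vertex tensors `T_a = Γ_a·Πλ^{1/2}`; consequently, the unit-trace normalized messages
`δ_{j,j'}·λ_ab[j]/Σ_k λ_ab[k]` satisfy the belief-propagation update equation up to a positive
constant factor. -/
theorem vidal_gauge_messages_are_bp_fixed_point
    (net : VidalNet G) (hortho : ∀ a b : V, ∀ hab : G.Adj a b, net.LocalOrtho hab) :
    (∀ a b : V, ∀ hab : G.Adj a b, ∀ j j' : ℕ,
      j < net.d ⟨s(a, b), (SimpleGraph.mem_edgeSet G).mpr hab⟩ →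
      j' < net.d ⟨s(a, b), (SimpleGraph.mem_edgeSet G).mpr hab⟩ →
      ∑ ia : Fin 2,
        ∑ g ∈ Fintype.piFinset
            (fun e : SideEdges G a s(a, b) => Finset.range (net.d e.1.1)),
          ∑ g' ∈ Fintype.piFinset
              (fun e : SideEdges G a s(a, b) => Finset.range (net.d e.1.1)),
            net.symTensor a ia
                (fun e => if h : (e.1 : Sym2 V) = s(a, b) then j else g ⟨e, h⟩) *
              (starRingEnd ℂ)
                (net.symTensor a ia
                  (fun e => if h : (e.1 : Sym2 V) = s(a, b) then j' else g' ⟨e, h⟩)) *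
              ∏ e : SideEdges G a s(a, b),
                (if g e = g' e then (net.lam e.1.1 (g e) : ℂ) else 0)
        = if j = j' then (net.lam ⟨s(a, b), (SimpleGraph.mem_edgeSet G).mpr hab⟩ j : ℂ)
          else 0) ∧
    ((∀ e : G.edgeSet, 0 < ∑ k ∈ Finset.range (net.d e), net.lam e k) →
      ∀ a b : V, ∀ hab : G.Adj a b, ∃ cst : ℝ, 0 < cst ∧
        ∀ j j' : ℕ,
          j < net.d ⟨s(a, b), (SimpleGraph.mem_edgeSet G).mpr hab⟩ →
          j' < net.d ⟨s(a, b), (SimpleGraph.mem_edgeSet G).mpr hab⟩ →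
          ∑ ia : Fin 2,
            ∑ g ∈ Fintype.piFinset
                (fun e : SideEdges G a s(a, b) => Finset.range (net.d e.1.1)),
              ∑ g' ∈ Fintype.piFinset
                  (fun e : SideEdges G a s(a, b) => Finset.range (net.d e.1.1)),
                net.symTensor a ia
                    (fun e => if h : (e.1 : Sym2 V) = s(a, b) then j else g ⟨e, h⟩) *
                  (starRingEnd ℂ)
                    (net.symTensor a ia
                      (fun e => if h : (e.1 : Sym2 V) = s(a, b) then j' else g' ⟨e, h⟩)) *
                  ∏ e : SideEdges G a s(a, b),
                    (if g e = g' e then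
                      ((net.lam e.1.1 (g e) /
                        ∑ k ∈ Finset.range (net.d e.1.1), net.lam e.1.1 k : ℝ) : ℂ)
                    else 0)
            = (cst : ℂ) *
                (if j = j' then
                  ((net.lam ⟨s(a, b), (SimpleGraph.mem_edgeSet G).mpr hab⟩ j /
                    ∑ k ∈ Finset.range (net.d ⟨s(a, b), (SimpleGraph.mem_edgeSet G).mpr hab⟩),
                      net.lam ⟨s(a, b), (SimpleGraph.mem_edgeSet G).mpr hab⟩ k : ℝ) : ℂ)
                else 0)) := by
  constructor
  · exact fun a b hab j j' hj hj' => bp_exact net hortho a b hab j j' hj hj'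
  · intro hS a b hab
    refine ⟨(∑ k ∈ Finset.range (net.d ⟨s(a, b), (SimpleGraph.mem_edgeSet G).mpr hab⟩),
        net.lam ⟨s(a, b), (SimpleGraph.mem_edgeSet G).mpr hab⟩ k) *
        ∏ e : SideEdges G a s(a, b),
          (∑ k ∈ Finset.range (net.d e.1.1), net.lam e.1.1 k)⁻¹,
      mul_pos (hS _) (Finset.prod_pos fun e _ => inv_pos.mpr (hS e.1.1)), ?_⟩
    intro j j' hj hj'
    set C : ℂ := ((∏ e : SideEdges G a s(a, b),
        (∑ k ∈ Finset.range (net.d e.1.1), net.lam e.1.1 k)⁻¹ : ℝ) : ℂ) with hC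
    have hterm : ∀ (g g' : SideEdges G a s(a, b) → ℕ),
        (∏ e : SideEdges G a s(a, b),
          (if g e = g' e then
            ((net.lam e.1.1 (g e) /
              ∑ k ∈ Finset.range (net.d e.1.1), net.lam e.1.1 k : ℝ) : ℂ)
          else 0))
        = C * ∏ e : SideEdges G a s(a, b),
            (if g e = g' e then (net.lam e.1.1 (g e) : ℂ) else 0) := by
      intro g g'
      rw [hC, Complex.ofReal_prod, ← Finset.prod_mul_distrib]
      refine Finset.prod_congr rfl fun e _ => ?_
      by_cases h : g e = g' e
      · simp only [if_pos h]
        push_cast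
        rw [div_eq_inv_mul]
      · simp [h]
    simp only [hterm]
    simp only [show ∀ (x y z : ℂ), x * y * (C * z) = C * (x * y * z) from
      fun x y z => by ring]
    simp only [← Finset.mul_sum]
    rw [bp_exact net hortho a b hab j j' hj hj']
    by_cases hjj : j = j'
    · simp only [if_pos hjj]
      rw [hC]
      have h0 : (∑ k ∈ Finset.range (net.d ⟨s(a, b), (SimpleGraph.mem_edgeSet G).mpr hab⟩),
          net.lam ⟨s(a, b), (SimpleGraph.mem_edgeSet G).mpr hab⟩ k) ≠ 0 := ne_of_gt (hS _)
      push_cast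
      have h0c : (∑ i ∈ Finset.range (net.d ⟨s(a, b), (SimpleGraph.mem_edgeSet G).mpr hab⟩),
          ((net.lam ⟨s(a, b), (SimpleGraph.mem_edgeSet G).mpr hab⟩ i : ℝ) : ℂ)) ≠ 0 := by
        rw [← Complex.ofReal_sum]
        exact Complex.ofReal_ne_zero.mpr h0
      rw [div_eq_mul_inv,
        show ∀ (S P l Si : ℂ), S * P * (l * Si) = l * P * (S * Si) from
          fun _ _ _ _ => by ring,
        mul_inv_cancel₀ h0c, mul_one, mul_comm]
    · simp [hjj]
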